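/- For an irrational real θ, define S_{-θ} to be the set of positive integers q such that ⌈q(−θ)⌉/q < ⌈q′(−θ)⌉/q′ for all integers q′ with 1 ≤ q′ ≤ q − 1. Then for every q ∈ S_{-θ}, gcd(q, ⌊qθ⌋) = 1. -/

import Mathlib

theorem stmt9 (θ : ℝ) (hθ : Irrational θ) (q : ℕ) (hq : 0 < q)
    (hmem : ∀ q' : ℕ, 1 ≤ q' → q' ≤ q - 1 →
      (⌈(q : ℝ) * (-θ)⌉ : ℝ) / q < (⌈(q' : ℝ) * (-θ)⌉ : ℝ) / q') :
    Int.gcd (q : ℤ) ⌊(q : ℝ) * θ⌋ = 1 := by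
  set n : ℤ := ⌊(q : ℝ) * θ⌋ with hn
  by_contra hd
  set d : ℕ := Int.gcd (q : ℤ) n with hdd
  have hdq : d ∣ q := by
    have h : ((d : ℤ)) ∣ (q : ℤ) := Int.gcd_dvd_left _ _
    exact_mod_cast h
  have hdn : (d : ℤ) ∣ n := Int.gcd_dvd_right _ _
  have hd0 : d ≠ 0 := by
    intro h
    rw [h] at hdq
    have := Nat.eq_zero_of_zero_dvd hdq
    omega
  have hd2 : 2 ≤ d := by omega
  obtain ⟨q'', hq''⟩ := hdq
  obtain ⟨m, hm⟩ := hdn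
  have hq''1 : 1 ≤ q'' := by
    by_contra h
    have hz : q'' = 0 := by omega
    rw [hz, Nat.mul_zero] at hq''
    omega
  have hq''lt : q'' ≤ q - 1 := by
    have h2 : 2 * q'' ≤ d * q'' := Nat.mul_le_mul_right q'' hd2
    omega
  have key := hmem q'' hq''1 hq''lt
  have hceil : ∀ x : ℝ, ⌈x * (-θ)⌉ = -⌊x * θ⌋ := by
    intro x; rw [mul_neg, Int.ceil_neg]
  rw [hceil, hceil, ← hn] at key
  have hq''pos : (0 : ℝ) < (q'' : ℝ) := by exact_mod_cast hq''1
  have hqpos : (0 : ℝ) < (q : ℝ) := by exact_mod_cast hq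
  rw [div_lt_div_iff₀ hqpos hq''pos] at key
  -- key : (-n : ℝ) * q'' < (-⌊q''θ⌋) * q
  have hfl : ⌊(q'' : ℝ) * θ⌋ < m := by
    have hqr : (q : ℝ) = (d : ℝ) * (q'' : ℝ) := by exact_mod_cast hq''
    have hnr : ((n : ℝ)) = (d : ℝ) * (m : ℝ) := by exact_mod_cast hm
    have hdpos : (0 : ℝ) < (d : ℝ) := by exact_mod_cast (by omega : 0 < d)
    push_cast at key
    rw [hqr, hnr] at key
    have : -(m : ℝ) < -(⌊(q'' : ℝ) * θ⌋ : ℝ) := by nlinarith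
    exact_mod_cast neg_lt_neg_iff.mp this
  have hgt : (m : ℝ) < (q'' : ℝ) * θ := by
    have hirr : (q : ℝ) * θ ≠ (n : ℝ) := by
      intro h
      have : Irrational ((q : ℝ) * θ) := by
        apply (hθ.natCast_mul (by exact_mod_cast hq.ne' : (q:ℕ) ≠ 0))
      exact this ⟨(n : ℚ), by push_cast; exact h.symm⟩
    have hfloor : (n : ℝ) < (q : ℝ) * θ :=
      lt_of_le_of_ne (Int.floor_le _) (Ne.symm hirr)
    have hqr : (q : ℝ) = (d : ℝ) * (q'' : ℝ) := by exact_mod_cast hq''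
    have hnr : ((n : ℝ)) = (d : ℝ) * (m : ℝ) := by exact_mod_cast hm
    have hdpos : (0 : ℝ) < (d : ℝ) := by exact_mod_cast (by omega : 0 < d)
    rw [hqr, hnr] at hfloor
    nlinarith
  have : m ≤ ⌊(q'' : ℝ) * θ⌋ := Int.le_floor.mpr hgt.le
  omega
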